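/- Let (Ŷ, Y, A) be {0,1}-valued random variables such that for all a, y, ŷ ∈ {0,1}, Pr[Y = y, A = a] > 0 and Pr[Ŷ = ŷ, A = a] > 0. Suppose (Ŷ, Y, A) satisfies both exact separation and exact sufficiency, and suppose ρ₀ ≠ ρ₁, where ρ_a = Pr[Y = 1 | A = a]/Pr[Y = 0 | A = a]. Then either Pr[Ŷ = Y] = 1 (the classifier is perfect) or Pr[Ŷ = 1 − Y] = 1 (the classifier is perfectly flipped). -/

import Mathlib

open MeasureTheory

/-- Conditional probability `Pr[s | t]` as a real number. -/
noncomputable def condProb {Ω : Type*} [MeasurableSpace Ω] (μ : Measure Ω) (s t : Set Ω) : ℝ :=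
  (μ (s ∩ t)).toReal / (μ t).toReal

private lemma split_two {Ω : Type*} [MeasurableSpace Ω] (μ : Measure Ω) [IsFiniteMeasure μ]
    {f : Ω → Fin 2} (hf : Measurable f) (t : Set Ω) (ht : MeasurableSet t) :
    (μ ({ω | f ω = 0} ∩ t)).toReal + (μ ({ω | f ω = 1} ∩ t)).toReal = (μ t).toReal := by
  have hdis : Disjoint ({ω | f ω = 0} ∩ t) ({ω | f ω = 1} ∩ t) := by
    rw [Set.disjoint_left]
    rintro ω ⟨h0, -⟩ ⟨h1, -⟩
    simp only [Set.mem_setOf_eq] at h0 h1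
    rw [h0] at h1
    exact absurd h1 (by decide)
  have hunion : ({ω | f ω = 0} ∩ t) ∪ ({ω | f ω = 1} ∩ t) = t := by
    ext ω
    simp only [Set.mem_union, Set.mem_inter_iff, Set.mem_setOf_eq]
    constructor
    · rintro (⟨-, h⟩ | ⟨-, h⟩) <;> exact h
    · intro h
      rcases (by decide : ∀ x : Fin 2, x = 0 ∨ x = 1) (f ω) with h0 | h1
      · exact Or.inl ⟨h0, h⟩
      · exact Or.inr ⟨h1, h⟩
  rw [← ENNReal.toReal_add (measure_ne_top μ _) (measure_ne_top μ _),
    ← measure_union hdis ((hf (measurableSet_singleton 1)).inter ht), hunion]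

/-- If `(Ŷ, Y, A)` satisfies both exact separation and exact sufficiency, and the group
conditional base odds differ (`ρ₀ ≠ ρ₁`), then the classifier is perfect or perfectly
flipped. -/
theorem stmt_5 {Ω : Type*} [MeasurableSpace Ω] (μ : Measure Ω) [IsProbabilityMeasure μ]
    (Yh Y A : Ω → Fin 2) (hYh : Measurable Yh) (hY : Measurable Y) (hA : Measurable A)
    (hposY : ∀ a y : Fin 2, 0 < μ {ω | Y ω = y ∧ A ω = a})
    (hposYh : ∀ a yh : Fin 2, 0 < μ {ω | Yh ω = yh ∧ A ω = a})
    (hsep : ∀ a y yh : Fin 2,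
      condProb μ {ω | Yh ω = yh} {ω | Y ω = y ∧ A ω = a}
        = condProb μ {ω | Yh ω = yh} {ω | Y ω = y})
    (hsuff : ∀ a y yh : Fin 2,
      condProb μ {ω | Y ω = y} {ω | Yh ω = yh ∧ A ω = a}
        = condProb μ {ω | Y ω = y} {ω | Yh ω = yh})
    (hrho : condProb μ {ω | Y ω = 1} {ω | A ω = 0} / condProb μ {ω | Y ω = 0} {ω | A ω = 0}
      ≠ condProb μ {ω | Y ω = 1} {ω | A ω = 1} / condProb μ {ω | Y ω = 0} {ω | A ω = 1}) :
    μ {ω | Yh ω = Y ω} = 1 ∨ μ {ω | Yh ω = 1 - Y ω} = 1 := by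
  classical
  -- measurability facts
  have mYs : ∀ y : Fin 2, MeasurableSet {ω | Y ω = y} := fun y => hY (measurableSet_singleton y)
  have mYhs : ∀ y : Fin 2, MeasurableSet {ω | Yh ω = y} := fun y => hYh (measurableSet_singleton y)
  have mAs : ∀ a : Fin 2, MeasurableSet {ω | A ω = a} := fun a => hA (measurableSet_singleton a)
  have mYA : ∀ y a : Fin 2, MeasurableSet {ω | Y ω = y ∧ A ω = a} :=
    fun y a => (mYs y).inter (mAs a)
  have mYhA : ∀ yh a : Fin 2, MeasurableSet {ω | Yh ω = yh ∧ A ω = a} :=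
    fun yh a => (mYhs yh).inter (mAs a)
  -- abbreviations
  obtain ⟨m, hm⟩ : ∃ m : Fin 2 → Fin 2 → ℝ,
      ∀ a y, m a y = (μ {ω | Y ω = y ∧ A ω = a}).toReal := ⟨_, fun _ _ => rfl⟩
  obtain ⟨n, hn⟩ : ∃ n : Fin 2 → Fin 2 → ℝ,
      ∀ a yh, n a yh = (μ {ω | Yh ω = yh ∧ A ω = a}).toReal := ⟨_, fun _ _ => rfl⟩
  obtain ⟨p, hp⟩ : ∃ p : Fin 2 → Fin 2 → ℝ,
      ∀ yh y, p yh y = condProb μ {ω | Yh ω = yh} {ω | Y ω = y} := ⟨_, fun _ _ => rfl⟩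
  obtain ⟨q, hq⟩ : ∃ q : Fin 2 → Fin 2 → ℝ,
      ∀ y yh, q y yh = condProb μ {ω | Y ω = y} {ω | Yh ω = yh} := ⟨_, fun _ _ => rfl⟩
  have m_pos : ∀ a y, 0 < m a y := by
    intro a y; rw [hm]
    exact ENNReal.toReal_pos (hposY a y).ne' (measure_ne_top μ _)
  have n_pos : ∀ a yh, 0 < n a yh := by
    intro a yh; rw [hn]
    exact ENNReal.toReal_pos (hposYh a yh).ne' (measure_ne_top μ _)
  have Ypos : ∀ y, 0 < (μ {ω | Y ω = y}).toReal := by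
    intro y
    refine ENNReal.toReal_pos (ne_of_gt ?_) (measure_ne_top μ _)
    exact lt_of_lt_of_le (hposY 0 y) (measure_mono (fun ω h => h.1))
  have Apos : ∀ a, 0 < (μ {ω | A ω = a}).toReal := by
    intro a
    refine ENNReal.toReal_pos (ne_of_gt ?_) (measure_ne_top μ _)
    exact lt_of_lt_of_le (hposY a 0) (measure_mono (fun ω h => h.2))
  -- basic set identities
  have interYA : ∀ y a : Fin 2, {ω | Y ω = y} ∩ {ω | A ω = a} = {ω | Y ω = y ∧ A ω = a} :=
    fun _ _ => rfl
  have seteq : ∀ (y a yh : Fin 2),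
      {ω | Y ω = y} ∩ {ω | Yh ω = yh ∧ A ω = a}
        = {ω | Yh ω = yh} ∩ {ω | Y ω = y ∧ A ω = a} := by
    intro y a yh
    ext ω
    simp only [Set.mem_inter_iff, Set.mem_setOf_eq]
    tauto
  -- key identity from separation
  have key1 : ∀ a y yh,
      (μ ({ω | Yh ω = yh} ∩ {ω | Y ω = y ∧ A ω = a})).toReal = p yh y * m a y := by
    intro a y yh
    have hne : m a y ≠ 0 := (m_pos a y).ne'
    rw [hp, hm, ← hsep a y yh, condProb]
    rw [hm] at hne
    field_simp
  -- key identity from sufficiency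
  have key2 : ∀ a y yh,
      (μ ({ω | Yh ω = yh} ∩ {ω | Y ω = y ∧ A ω = a})).toReal = q y yh * n a yh := by
    intro a y yh
    have hne : n a yh ≠ 0 := (n_pos a yh).ne'
    rw [← seteq, hq, hn, ← hsuff a y yh, condProb]
    rw [hn] at hne
    field_simp
  have E : ∀ a y yh, p yh y * m a y = q y yh * n a yh :=
    fun a y yh => (key1 a y yh).symm.trans (key2 a y yh)
  -- expansion of n
  have nexp : ∀ a yh, n a yh = p yh 0 * m a 0 + p yh 1 * m a 1 := by
    intro a yh
    have hs := split_two μ hY {ω | Yh ω = yh ∧ A ω = a} (mYhA yh a)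
    rw [seteq 0 a yh, seteq 1 a yh, key1 a 0 yh, key1 a 1 yh] at hs
    rw [hn, ← hs]
  -- p sums to one
  have psum : ∀ y, p 0 y + p 1 y = 1 := by
    intro y
    have hs := split_two μ hYh {ω | Y ω = y} (mYs y)
    rw [hp, hp, condProb, condProb, ← add_div, hs, div_self (Ypos y).ne']
  -- cross relation
  have cross : ∀ yh, p yh 0 * p yh 1 * (m 0 1 * m 1 0 - m 1 1 * m 0 0) = 0 := by
    intro yh
    have e0 := E 0 1 yh
    have e1 := E 1 1 yh
    have h01 : p yh 1 * m 0 1 * n 1 yh = p yh 1 * m 1 1 * n 0 yh := by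
      linear_combination n 1 yh * e0 - n 0 yh * e1
    rw [nexp 0 yh, nexp 1 yh] at h01
    linear_combination h01
  -- the determinant is nonzero
  have hrho' : m 0 1 / m 0 0 ≠ m 1 1 / m 1 0 := by
    intro h
    apply hrho
    have cancel : ∀ x y c : ℝ, c ≠ 0 → (x / c) / (y / c) = x / y := by
      intro x y c hc
      rcases eq_or_ne y 0 with rfl | hy
      · simp
      · field_simp
    simp only [condProb]
    rw [interYA 1 0, interYA 0 0, interYA 1 1, interYA 0 1,
      ← hm 0 1, ← hm 0 0, ← hm 1 1, ← hm 1 0,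
      cancel _ _ _ (Apos 0).ne', cancel _ _ _ (Apos 1).ne']
    exact h
  have Dne : m 0 1 * m 1 0 - m 1 1 * m 0 0 ≠ 0 := by
    intro hD
    apply hrho'
    rw [div_eq_div_iff (m_pos 0 0).ne' (m_pos 1 0).ne']
    linarith
  have hz : ∀ yh, p yh 0 * p yh 1 = 0 := by
    intro yh
    rcases mul_eq_zero.mp (cross yh) with h | h
    · exact h
    · exact absurd h Dne
  -- null sets from vanishing conditional probabilities
  have pzero : ∀ yh y, p yh y = 0 → μ ({ω | Yh ω = yh} ∩ {ω | Y ω = y}) = 0 := by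
    intro yh y h
    rw [hp, condProb, div_eq_iff (Ypos y).ne', zero_mul] at h
    rcases (ENNReal.toReal_eq_zero_iff _).mp h with h' | h'
    · exact h'
    · exact absurd h' (measure_ne_top μ _)
  rcases mul_eq_zero.mp (hz 1) with h10 | h11
  · rcases mul_eq_zero.mp (hz 0) with h00 | h01
    · exfalso; have := psum 0; rw [h00, h10] at this; norm_num at this
    · -- perfect classifier: p 1 0 = 0 and p 0 1 = 0
      left
      have hset : {ω | Yh ω = Y ω}
          = ({ω | Yh ω = 0} ∩ {ω | Y ω = 0}) ∪ ({ω | Yh ω = 1} ∩ {ω | Y ω = 1}) := by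
        ext ω
        simp only [Set.mem_setOf_eq, Set.mem_union, Set.mem_inter_iff]
        exact (by decide : ∀ x y : Fin 2, x = y ↔ (x = 0 ∧ y = 0) ∨ (x = 1 ∧ y = 1)) _ _
      rw [hset]
      rw [← prob_compl_eq_zero_iff (((mYhs 0).inter (mYs 0)).union ((mYhs 1).inter (mYs 1)))]
      refine measure_mono_null ?_ (measure_union_null (pzero 1 0 h10) (pzero 0 1 h01))
      intro ω hω
      simp only [Set.mem_compl_iff, Set.mem_union, Set.mem_inter_iff, Set.mem_setOf_eq]
        at hω ⊢
      exact (by decide : ∀ x y : Fin 2,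
        ¬((x = 0 ∧ y = 0) ∨ (x = 1 ∧ y = 1)) → ((x = 1 ∧ y = 0) ∨ (x = 0 ∧ y = 1))) _ _ hω
  · rcases mul_eq_zero.mp (hz 0) with h00 | h01
    · -- flipped classifier: p 1 1 = 0 and p 0 0 = 0
      right
      have hset : {ω | Yh ω = 1 - Y ω}
          = ({ω | Yh ω = 1} ∩ {ω | Y ω = 0}) ∪ ({ω | Yh ω = 0} ∩ {ω | Y ω = 1}) := by
        ext ω
        simp only [Set.mem_setOf_eq, Set.mem_union, Set.mem_inter_iff]
        exact (by decide : ∀ x y : Fin 2, x = 1 - y ↔ (x = 1 ∧ y = 0) ∨ (x = 0 ∧ y = 1)) _ _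
      rw [hset]
      rw [← prob_compl_eq_zero_iff (((mYhs 1).inter (mYs 0)).union ((mYhs 0).inter (mYs 1)))]
      refine measure_mono_null ?_ (measure_union_null (pzero 0 0 h00) (pzero 1 1 h11))
      intro ω hω
      simp only [Set.mem_compl_iff, Set.mem_union, Set.mem_inter_iff, Set.mem_setOf_eq]
        at hω ⊢
      exact (by decide : ∀ x y : Fin 2,
        ¬((x = 1 ∧ y = 0) ∨ (x = 0 ∧ y = 1)) → ((x = 0 ∧ y = 0) ∨ (x = 1 ∧ y = 1))) _ _ hω
    · exfalso; have := psum 1; rw [h01, h11] at this; norm_num at this
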